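/- Let μ be a mass distribution on ℝ² with connected support and let v ∈ S¹. Then there exists a pair of lines (ℓ₁, ℓ₂) in ℝ² such that each of the four open quadrants determined by ℓ₁ and ℓ₂ has measure μ(ℝ²)/4, and v bisects the angle between ℓ₁ and ℓ₂. -/

import Mathlib

open MeasureTheory Real
open scoped RealInnerProductSpace

noncomputable section

abbrev E2 := EuclideanSpace ℝ (Fin 2)

/-- Counterclockwise rotation of a vector of ℝ² by the angle `θ`. -/
def rot (θ : ℝ) (v : E2) : E2 :=
  (WithLp.equiv 2 (Fin 2 → ℝ)).symm
    ![Real.cos θ * v 0 - Real.sin θ * v 1, Real.sin θ * v 0 + Real.cos θ * v 1]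

/-- Open half-plane on the positive (`true`) or negative (`false`) side of the oriented line
`{x | ⟪v, x⟫ = a}`. -/
def halfPlane (v : E2) (a : ℝ) (s : Bool) : Set E2 :=
  if s then {x | a < ⟪v, x⟫} else {x | ⟪v, x⟫ < a}

/-- The support of a measure: points all of whose neighborhoods have positive measure. -/
def msupport (μ : Measure E2) : Set E2 :=
  {x | ∀ r > 0, 0 < μ (Metric.ball x r)}

open Filter Set
open scoped Topology

lemma inner_e2 (u x : E2) : ⟪u, x⟫ = u 0 * x 0 + u 1 * x 1 := by
  simp [PiLp.inner_apply, Fin.sum_univ_two, RCLike.inner_apply, mul_comm]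

lemma norm_e2 (u : E2) : ‖u‖ = Real.sqrt (u 0 ^ 2 + u 1 ^ 2) := by
  rw [EuclideanSpace.norm_eq]
  simp [Fin.sum_univ_two, sq_abs]

lemma rot_apply0 (θ : ℝ) (v : E2) : rot θ v 0 = Real.cos θ * v 0 - Real.sin θ * v 1 := rfl
lemma rot_apply1 (θ : ℝ) (v : E2) : rot θ v 1 = Real.sin θ * v 0 + Real.cos θ * v 1 := rfl

lemma norm_rot (θ : ℝ) (v : E2) : ‖rot θ v‖ = ‖v‖ := by
  rw [norm_e2, norm_e2, rot_apply0, rot_apply1]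
  congr 1
  have := sin_sq_add_cos_sq θ
  nlinarith [this]

lemma continuous_rot (v : E2) : Continuous fun θ => rot θ v := by
  apply (PiLp.continuous_toLp ..).comp
  apply continuous_pi
  intro i
  fin_cases i <;> simp <;> fun_prop

lemma rot_zero (v : E2) : rot 0 v = v := by
  ext i
  fin_cases i <;> simp [rot_apply0, rot_apply1]

lemma rot_neg_pi_div_two (v : E2) : rot (-(π/2)) v = - rot (π/2) v := by
  ext i
  fin_cases i <;> simp [rot_apply0, rot_apply1]

lemma isOpen_halfPlane (v : E2) (a : ℝ) (s : Bool) : IsOpen (halfPlane v a s) := by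
  have hc : Continuous fun x : E2 => ⟪v, x⟫ := Continuous.inner continuous_const continuous_id
  cases s
  · exact isOpen_lt hc continuous_const
  · exact isOpen_lt continuous_const hc

lemma measurableSet_halfPlane (v : E2) (a : ℝ) (s : Bool) : MeasurableSet (halfPlane v a s) :=
  (isOpen_halfPlane v a s).measurableSet

lemma eventually_mem_hp {x u : E2} {a : ℝ} (h : ⟪u, x⟫ ≠ a) (s : Bool) :
    ∀ᶠ p : E2 × ℝ in 𝓝 (u, a), (x ∈ halfPlane p.1 p.2 s ↔ x ∈ halfPlane u a s) := by
  have hc : ContinuousAt (fun p : E2 × ℝ => ⟪p.1, x⟫ - p.2) (u, a) := by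
    apply ContinuousAt.sub
    · exact (Continuous.inner continuous_fst continuous_const).continuousAt
    · exact continuousAt_snd
  rcases h.lt_or_gt with hlt | hlt
  · have h1 : ∀ᶠ p : E2 × ℝ in 𝓝 (u, a), ⟪p.1, x⟫ - p.2 < 0 :=
      hc (Iio_mem_nhds (by simpa using sub_neg.mpr hlt))
    filter_upwards [h1] with p hp
    cases s <;> simp only [halfPlane, reduceIte, Bool.false_eq_true, if_false, Set.mem_setOf_eq] <;>
      constructor <;> intro h'' <;> linarith
  · have h1 : ∀ᶠ p : E2 × ℝ in 𝓝 (u, a), 0 < ⟪p.1, x⟫ - p.2 :=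
      hc (Ioi_mem_nhds (by simpa using sub_pos.mpr hlt))
    filter_upwards [h1] with p hp
    cases s <;> simp only [halfPlane, reduceIte, Bool.false_eq_true, if_false, Set.mem_setOf_eq] <;>
      constructor <;> intro h'' <;> linarith

variable {μ : Measure E2} [IsFiniteMeasure μ]

lemma tendsto_measure_hp (hlines : ∀ v : E2, v ≠ 0 → ∀ a : ℝ, μ {x | ⟪v, x⟫ = a} = 0)
    {u : E2} (hu : u ≠ 0) (a : ℝ) (s : Bool) :
    Tendsto (fun p : E2 × ℝ => μ (halfPlane p.1 p.2 s)) (𝓝 (u, a))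
      (𝓝 (μ (halfPlane u a s))) := by
  apply tendsto_measure_of_ae_tendsto_indicator_of_isFiniteMeasure
  · exact measurableSet_halfPlane u a s
  · exact fun p => measurableSet_halfPlane p.1 p.2 s
  · have hN : μ {x : E2 | ⟪u, x⟫ = a} = 0 := hlines u hu a
    filter_upwards [measure_eq_zero_iff_ae_notMem.mp hN] with x hx
    exact eventually_mem_hp hx s

lemma tendsto_measure_quad (hlines : ∀ v : E2, v ≠ 0 → ∀ a : ℝ, μ {x | ⟪v, x⟫ = a} = 0)
    {u₁ u₂ : E2} (h₁ : u₁ ≠ 0) (h₂ : u₂ ≠ 0) (a₁ a₂ : ℝ) (s₁ s₂ : Bool) :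
    Tendsto (fun p : (E2 × ℝ) × (E2 × ℝ) =>
        μ (halfPlane p.1.1 p.1.2 s₁ ∩ halfPlane p.2.1 p.2.2 s₂)) (𝓝 ((u₁, a₁), (u₂, a₂)))
      (𝓝 (μ (halfPlane u₁ a₁ s₁ ∩ halfPlane u₂ a₂ s₂))) := by
  apply tendsto_measure_of_ae_tendsto_indicator_of_isFiniteMeasure
  · exact (measurableSet_halfPlane u₁ a₁ s₁).inter (measurableSet_halfPlane u₂ a₂ s₂)
  · exact fun p => (measurableSet_halfPlane _ _ _).inter (measurableSet_halfPlane _ _ _)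
  · have hN : μ ({x : E2 | ⟪u₁, x⟫ = a₁} ∪ {x : E2 | ⟪u₂, x⟫ = a₂}) = 0 :=
      measure_union_null (hlines u₁ h₁ a₁) (hlines u₂ h₂ a₂)
    filter_upwards [measure_eq_zero_iff_ae_notMem.mp hN] with x hx
    rw [Set.mem_union, not_or] at hx
    have e1 := eventually_mem_hp hx.1 s₁
    have e2 := eventually_mem_hp hx.2 s₂
    have c1 : ContinuousAt (Prod.fst : (E2 × ℝ) × (E2 × ℝ) → E2 × ℝ) ((u₁, a₁), (u₂, a₂)) :=
      continuousAt_fst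
    have c2 : ContinuousAt (Prod.snd : (E2 × ℝ) × (E2 × ℝ) → E2 × ℝ) ((u₁, a₁), (u₂, a₂)) :=
      continuousAt_snd
    filter_upwards [c1.eventually e1, c2.eventually e2] with q hq1 hq2
    rw [Set.mem_inter_iff, Set.mem_inter_iff, hq1, hq2]

lemma msupport_compl_null (ν : Measure E2) : ν (msupport ν)ᶜ = 0 := by
  apply measure_null_of_locally_null
  intro x hx
  simp only [msupport, Set.mem_compl_iff, Set.mem_setOf_eq] at hx
  push_neg at hx
  obtain ⟨r, hr, hball⟩ := hx
  exact ⟨Metric.ball x r, mem_nhdsWithin_of_mem_nhds (Metric.ball_mem_nhds x hr),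
    le_antisymm hball zero_le⟩

lemma measurableSet_line (u : E2) (a : ℝ) : MeasurableSet {x : E2 | ⟪u, x⟫ = a} :=
  (isClosed_eq (Continuous.inner continuous_const continuous_id) continuous_const).measurableSet

lemma measure_inter_hp_add {μ : Measure E2}
    (hlines : ∀ v : E2, v ≠ 0 → ∀ a : ℝ, μ {x | ⟪v, x⟫ = a} = 0)
    {u : E2} (hu : u ≠ 0) (a : ℝ) {S : Set E2} (hS : MeasurableSet S) :
    μ (S ∩ halfPlane u a false) + μ (S ∩ halfPlane u a true) = μ S := by
  have hP : μ (S ∩ {x : E2 | ⟪u, x⟫ = a}) = 0 :=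
    measure_mono_null Set.inter_subset_right (hlines u hu a)
  have hdisj : Disjoint (S ∩ halfPlane u a false) (S ∩ halfPlane u a true) := by
    rw [Set.disjoint_iff]
    rintro x ⟨⟨-, h1⟩, ⟨-, h2⟩⟩
    simp only [halfPlane, reduceIte, Bool.false_eq_true, if_false, Set.mem_setOf_eq] at h1 h2
    exact absurd (h1.trans h2) (lt_irrefl _)
  have hunion : (S ∩ halfPlane u a false) ∪ (S ∩ halfPlane u a true)
      = S \ (S ∩ {x : E2 | ⟪u, x⟫ = a}) := by
    ext x
    simp only [halfPlane, reduceIte, Bool.false_eq_true, if_false, Set.mem_union,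
      Set.mem_inter_iff, Set.mem_setOf_eq, Set.mem_diff, not_and]
    constructor
    · rintro (⟨hs, h⟩ | ⟨hs, h⟩) <;> exact ⟨hs, fun _ => by intro he; simp [he] at h⟩
    · rintro ⟨hs, h⟩
      rcases lt_trichotomy (⟪u, x⟫) a with h' | h' | h'
      · exact Or.inl ⟨hs, h'⟩
      · exact absurd h' (h hs)
      · exact Or.inr ⟨hs, h'⟩
  rw [← measure_union hdisj (hS.inter (measurableSet_halfPlane u a true)), hunion,
    measure_diff_null hP]

lemma support_separation {μ : Measure E2} (hconn : IsConnected (msupport μ))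
    {u : E2} {a b : ℝ} (hab : a < b)
    (h0 : μ (halfPlane u b false ∩ halfPlane u a true) = 0)
    (hU : μ (halfPlane u b false) ≠ 0) (hV : μ (halfPlane u a true) ≠ 0) : False := by
  set U := halfPlane u b false with hUdef
  set V := halfPlane u a true with hVdef
  have hdisj : msupport μ ∩ (U ∩ V) = ∅ := by
    rw [Set.eq_empty_iff_forall_notMem]
    rintro x ⟨hxs, hxS⟩
    obtain ⟨r, hr, hball⟩ := Metric.isOpen_iff.mp
      ((isOpen_halfPlane u b false).inter (isOpen_halfPlane u a true)) x hxS
    exact absurd (le_antisymm (h0 ▸ measure_mono hball) zero_le)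
      (hxs r hr).ne'
  have hcover : msupport μ ⊆ U ∪ V := by
    intro x _
    by_cases h : ⟪u, x⟫ < b
    · exact Or.inl h
    · exact Or.inr (by simp only [hVdef, halfPlane, reduceIte, Set.mem_setOf_eq]; linarith [not_lt.mp h])
  have hUn : (msupport μ ∩ U).Nonempty := by
    rw [Set.nonempty_iff_ne_empty]
    intro h
    apply hU
    have : U ⊆ (msupport μ)ᶜ := by
      intro x hx
      intro hxs
      exact Set.eq_empty_iff_forall_notMem.mp h x ⟨hxs, hx⟩
    exact measure_mono_null this (msupport_compl_null μ)
  have hVn : (msupport μ ∩ V).Nonempty := by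
    rw [Set.nonempty_iff_ne_empty]
    intro h
    apply hV
    have : V ⊆ (msupport μ)ᶜ := by
      intro x hx hxs
      exact Set.eq_empty_iff_forall_notMem.mp h x ⟨hxs, hx⟩
    exact measure_mono_null this (msupport_compl_null μ)
  have := hconn.isPreconnected U V (isOpen_halfPlane u b false) (isOpen_halfPlane u a true)
    hcover hUn hVn
  rw [hdisj] at this
  exact Set.not_nonempty_empty this

lemma continuous_Fr {μ : Measure E2} [IsFiniteMeasure μ]
    (hlines : ∀ v : E2, v ≠ 0 → ∀ a : ℝ, μ {x | ⟪v, x⟫ = a} = 0)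
    {u : E2} (hu : u ≠ 0) (s : Bool) :
    Continuous fun a : ℝ => (μ (halfPlane u a s)).toReal := by
  rw [continuous_iff_continuousAt]
  intro a
  have key : Tendsto (fun a' : ℝ => ((u, a') : E2 × ℝ)) (𝓝 a) (𝓝 (u, a)) :=
    tendsto_const_nhds.prodMk_nhds tendsto_id
  have h2 := ((ENNReal.tendsto_toReal (measure_ne_top μ _)).comp
    (tendsto_measure_hp hlines hu a s)).comp key
  exact h2

def FrD (μ : Measure E2) (u : E2) (a : ℝ) : ℝ := (μ (halfPlane u a false)).toReal

def medD (μ : Measure E2) (u : E2) : ℝ :=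
  Classical.epsilon fun a => FrD μ u a = (μ Set.univ).toReal / 2

lemma halfPlane_neg (u : E2) (a : ℝ) (s : Bool) : halfPlane (-u) (-a) s = halfPlane u a (!s) := by
  cases s <;> ext x <;>
    simp only [halfPlane, reduceIte, Bool.false_eq_true, if_false, Set.mem_setOf_eq,
      inner_neg_left, Bool.not_true, Bool.not_false] <;>
    constructor <;> intro h <;> linarith

lemma halfPlane_inter_self_empty (u : E2) (a : ℝ) :
    halfPlane u a true ∩ halfPlane u a false = ∅ := by
  rw [Set.eq_empty_iff_forall_notMem]
  rintro x ⟨h1, h2⟩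
  simp only [halfPlane, reduceIte, Bool.false_eq_true, if_false, Set.mem_setOf_eq] at h1 h2
  linarith

variable {μ : Measure E2} [IsFiniteMeasure μ]

lemma FrD_mono (u : E2) : Monotone (FrD μ u) := by
  intro a b hab
  apply ENNReal.toReal_mono (measure_ne_top μ _)
  apply measure_mono
  intro x hx
  simp only [halfPlane, Bool.false_eq_true, if_false, Set.mem_setOf_eq] at hx ⊢
  linarith

lemma quad_sum (hlines : ∀ v : E2, v ≠ 0 → ∀ a : ℝ, μ {x | ⟪v, x⟫ = a} = 0)
    {u : E2} (hu : u ≠ 0) (a : ℝ) {S : Set E2} (hS : MeasurableSet S) :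
    (μ (S ∩ halfPlane u a false)).toReal + (μ (S ∩ halfPlane u a true)).toReal
      = (μ S).toReal := by
  rw [← ENNReal.toReal_add (measure_ne_top μ _) (measure_ne_top μ _),
    measure_inter_hp_add hlines hu a hS]

lemma FrD_compl (hlines : ∀ v : E2, v ≠ 0 → ∀ a : ℝ, μ {x | ⟪v, x⟫ = a} = 0)
    {u : E2} (hu : u ≠ 0) (a : ℝ) :
    (μ (halfPlane u a true)).toReal = (μ Set.univ).toReal - FrD μ u a := by
  have h := quad_sum hlines hu a MeasurableSet.univ
  rw [Set.univ_inter, Set.univ_inter] at h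
  rw [FrD]
  linarith

lemma halving_exists (hlines : ∀ v : E2, v ≠ 0 → ∀ a : ℝ, μ {x | ⟪v, x⟫ = a} = 0)
    (hm0 : μ Set.univ ≠ 0) {u : E2} (hu : ‖u‖ = 1) :
    ∃ a : ℝ, FrD μ u a = (μ Set.univ).toReal / 2 := by
  have hmpos : 0 < (μ Set.univ).toReal := ENNReal.toReal_pos hm0 (measure_ne_top μ _)
  have hne : u ≠ 0 := fun h => by rw [h] at hu; simp at hu
  have hball : ∃ R : ℝ, 0 < R ∧ (μ Set.univ).toReal / 2 < (μ (Metric.ball 0 R)).toReal := by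
    have hmonoball : Monotone fun n : ℕ => Metric.ball (0 : E2) n := fun i j hij =>
      Metric.ball_subset_ball (by exact_mod_cast hij)
    have h1 := tendsto_measure_iUnion_atTop (μ := μ) hmonoball
    rw [Metric.iUnion_ball_nat] at h1
    have h2 := (ENNReal.tendsto_toReal (measure_ne_top μ _)).comp h1
    have h3 : ∀ᶠ n : ℕ in atTop,
        (μ Set.univ).toReal / 2 < (μ (Metric.ball (0 : E2) n)).toReal :=
      h2.eventually_const_lt (by linarith)
    obtain ⟨n, hn⟩ := h3.exists
    refine ⟨n, ?_, hn⟩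
    by_contra hR
    push_neg at hR
    rw [Metric.ball_eq_empty.mpr hR] at hn
    simp at hn
    linarith
  obtain ⟨R, hRpos, hRball⟩ := hball
  have habsle : ∀ x : E2, |⟪u, x⟫| ≤ ‖x‖ := by
    intro x
    calc |⟪u, x⟫| ≤ ‖u‖ * ‖x‖ := abs_real_inner_le_norm u x
      _ = ‖x‖ := by rw [hu, one_mul]
  have hFrlow : FrD μ u (-R) < (μ Set.univ).toReal / 2 := by
    have hsub : halfPlane u (-R) false ⊆ (Metric.ball (0 : E2) R)ᶜ := by
      intro x hx hxball
      simp only [halfPlane, Bool.false_eq_true, if_false, Set.mem_setOf_eq] at hx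
      rw [Metric.mem_ball, dist_zero_right] at hxball
      have := abs_le.mp (habsle x)
      linarith [this.1]
    have h2 : FrD μ u (-R) ≤ (μ (Metric.ball (0 : E2) R)ᶜ).toReal :=
      ENNReal.toReal_mono (measure_ne_top μ _) (measure_mono hsub)
    have h3 : (μ (Metric.ball (0 : E2) R)ᶜ).toReal
        = (μ Set.univ).toReal - (μ (Metric.ball (0 : E2) R)).toReal := by
      rw [measure_compl Metric.isOpen_ball.measurableSet (measure_ne_top μ _),
        ENNReal.toReal_sub_of_le (measure_mono (Set.subset_univ _)) (measure_ne_top μ _)]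
    linarith
  have hFrhigh : (μ Set.univ).toReal / 2 < FrD μ u R := by
    have hsub : Metric.ball (0 : E2) R ⊆ halfPlane u R false := by
      intro x hx
      rw [Metric.mem_ball, dist_zero_right] at hx
      simp only [halfPlane, Bool.false_eq_true, if_false, Set.mem_setOf_eq]
      have := abs_le.mp (habsle x)
      linarith [this.2]
    exact lt_of_lt_of_le hRball (ENNReal.toReal_mono (measure_ne_top μ _) (measure_mono hsub))
  obtain ⟨a, -, ha⟩ := intermediate_value_Icc (by linarith : (-R : ℝ) ≤ R)
    ((continuous_Fr hlines hne false).continuousOn)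
    ⟨le_of_lt hFrlow, le_of_lt hFrhigh⟩
  exact ⟨a, ha⟩

lemma halving_uniq (hlines : ∀ v : E2, v ≠ 0 → ∀ a : ℝ, μ {x | ⟪v, x⟫ = a} = 0)
    (hconn : IsConnected (msupport μ)) (hm0 : μ Set.univ ≠ 0) {u : E2} (hu : ‖u‖ = 1)
    {a b : ℝ} (ha : FrD μ u a = (μ Set.univ).toReal / 2)
    (hb : FrD μ u b = (μ Set.univ).toReal / 2) : a = b := by
  have hmpos : 0 < (μ Set.univ).toReal := ENNReal.toReal_pos hm0 (measure_ne_top μ _)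
  have hne : u ≠ 0 := fun h => by rw [h] at hu; simp at hu
  have hstep : ∀ a b : ℝ, a < b → FrD μ u a = (μ Set.univ).toReal / 2 →
      FrD μ u b = (μ Set.univ).toReal / 2 → False := by
    intro a b hab ha hb
    have heq : μ (halfPlane u a false) = μ (halfPlane u b false) :=
      (ENNReal.toReal_eq_toReal_iff' (measure_ne_top μ _) (measure_ne_top μ _)).mp
        (ha.trans hb.symm)
    have hslab : μ (halfPlane u b false ∩ halfPlane u a true) = 0 := by
      have hdisj : Disjoint (halfPlane u a false)
          (halfPlane u b false ∩ halfPlane u a true) := by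
        rw [Set.disjoint_iff]
        rintro x ⟨h1, -, h2⟩
        simp only [halfPlane, reduceIte, Bool.false_eq_true, if_false,
          Set.mem_setOf_eq] at h1 h2
        exact absurd (h1.trans h2) (lt_irrefl _)
      have hsub : halfPlane u a false ∪ (halfPlane u b false ∩ halfPlane u a true)
          ⊆ halfPlane u b false := by
        rintro x (h1 | ⟨h1, -⟩)
        · simp only [halfPlane, Bool.false_eq_true, if_false, Set.mem_setOf_eq] at h1 ⊢
          linarith
        · exact h1
      have h1 : μ (halfPlane u a false) + μ (halfPlane u b false ∩ halfPlane u a true)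
          ≤ μ (halfPlane u a false) := by
        rw [← measure_union hdisj
          ((measurableSet_halfPlane u b false).inter (measurableSet_halfPlane u a true)), heq]
        exact measure_mono hsub
      have h2 := (ENNReal.add_le_add_iff_left (measure_ne_top μ _)).mp
        (le_trans h1 (le_of_eq (add_zero _).symm))
      simpa using h2
    have hU : μ (halfPlane u b false) ≠ 0 := by
      intro h
      rw [FrD, h] at hb
      simp only [ENNReal.toReal_zero] at hb
      linarith
    have hV : μ (halfPlane u a true) ≠ 0 := by
      intro h
      have h2 := FrD_compl hlines hne a
      rw [h, ha] at h2
      simp only [ENNReal.toReal_zero] at h2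
      linarith
    exact support_separation hconn hab hslab hU hV
  rcases lt_trichotomy a b with h | h | h
  · exact absurd (hstep a b h ha hb) not_false
  · exact h
  · exact absurd (hstep b a h hb ha) not_false

lemma medD_spec (hlines : ∀ v : E2, v ≠ 0 → ∀ a : ℝ, μ {x | ⟪v, x⟫ = a} = 0)
    (hm0 : μ Set.univ ≠ 0) {u : E2} (hu : ‖u‖ = 1) :
    FrD μ u (medD μ u) = (μ Set.univ).toReal / 2 :=
  Classical.epsilon_spec (halving_exists hlines hm0 hu)

lemma tendsto_medD (hlines : ∀ v : E2, v ≠ 0 → ∀ a : ℝ, μ {x | ⟪v, x⟫ = a} = 0)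
    (hconn : IsConnected (msupport μ)) (hm0 : μ Set.univ ≠ 0)
    {c : ℝ → E2} (hc : Continuous c) (hcu : ∀ t, ‖c t‖ = 1) (t₀ : ℝ) :
    Tendsto (fun t => medD μ (c t)) (𝓝 t₀) (𝓝 (medD μ (c t₀))) := by
  have hmpos : 0 < (μ Set.univ).toReal := ENNReal.toReal_pos hm0 (measure_ne_top μ _)
  rw [Metric.tendsto_nhds]
  intro ε hε
  have hu1 : ‖c t₀‖ = 1 := hcu t₀
  have hune : c t₀ ≠ 0 := fun h => by rw [h] at hu1; simp at hu1
  have hFram : FrD μ (c t₀) (medD μ (c t₀)) = (μ Set.univ).toReal / 2 :=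
    medD_spec hlines hm0 hu1
  have hlow : FrD μ (c t₀) (medD μ (c t₀) - ε) < (μ Set.univ).toReal / 2 := by
    have hle : FrD μ (c t₀) (medD μ (c t₀) - ε) ≤ (μ Set.univ).toReal / 2 :=
      le_of_le_of_eq (FrD_mono (c t₀) (by linarith)) hFram
    rcases hle.lt_or_eq with h | h
    · exact h
    · exact absurd (halving_uniq hlines hconn hm0 hu1 h hFram) (by intro h'; linarith)
  have hhigh : (μ Set.univ).toReal / 2 < FrD μ (c t₀) (medD μ (c t₀) + ε) := by
    have hle : (μ Set.univ).toReal / 2 ≤ FrD μ (c t₀) (medD μ (c t₀) + ε) :=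
      le_of_eq_of_le hFram.symm (FrD_mono (c t₀) (by linarith))
    rcases hle.lt_or_eq with h | h
    · exact h
    · exact absurd (halving_uniq hlines hconn hm0 hu1 hFram h.symm) (by intro h'; linarith)
  have tlow : Tendsto (fun t => FrD μ (c t) (medD μ (c t₀) - ε)) (𝓝 t₀)
      (𝓝 (FrD μ (c t₀) (medD μ (c t₀) - ε))) := by
    have key : Tendsto (fun t => ((c t, medD μ (c t₀) - ε) : E2 × ℝ)) (𝓝 t₀)
        (𝓝 (c t₀, medD μ (c t₀) - ε)) := (hc.tendsto t₀).prodMk_nhds tendsto_const_nhds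
    unfold FrD
    have h1 := (tendsto_measure_hp hlines hune (medD μ (c t₀) - ε) false).comp key
    exact (ENNReal.tendsto_toReal
      (measure_ne_top μ (halfPlane (c t₀) (medD μ (c t₀) - ε) false))).comp h1
  have thigh : Tendsto (fun t => FrD μ (c t) (medD μ (c t₀) + ε)) (𝓝 t₀)
      (𝓝 (FrD μ (c t₀) (medD μ (c t₀) + ε))) := by
    have key : Tendsto (fun t => ((c t, medD μ (c t₀) + ε) : E2 × ℝ)) (𝓝 t₀)
        (𝓝 (c t₀, medD μ (c t₀) + ε)) := (hc.tendsto t₀).prodMk_nhds tendsto_const_nhds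
    unfold FrD
    have h1 := (tendsto_measure_hp hlines hune (medD μ (c t₀) + ε) false).comp key
    exact (ENNReal.tendsto_toReal
      (measure_ne_top μ (halfPlane (c t₀) (medD μ (c t₀) + ε) false))).comp h1
  have e1 : ∀ᶠ t in 𝓝 t₀, FrD μ (c t) (medD μ (c t₀) - ε) < (μ Set.univ).toReal / 2 :=
    tlow.eventually_lt_const hlow
  have e2 : ∀ᶠ t in 𝓝 t₀, (μ Set.univ).toReal / 2 < FrD μ (c t) (medD μ (c t₀) + ε) :=
    thigh.eventually_const_lt hhigh
  filter_upwards [e1, e2] with t h1 h2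
  have hspec : FrD μ (c t) (medD μ (c t)) = (μ Set.univ).toReal / 2 :=
    medD_spec hlines hm0 (hcu t)
  rw [Real.dist_eq, abs_lt]
  constructor
  · by_contra h
    push_neg at h
    have : FrD μ (c t) (medD μ (c t)) ≤ FrD μ (c t) (medD μ (c t₀) - ε) :=
      FrD_mono (c t) (by linarith)
    rw [hspec] at this
    linarith
  · by_contra h
    push_neg at h
    have : FrD μ (c t) (medD μ (c t₀) + ε) ≤ FrD μ (c t) (medD μ (c t)) :=
      FrD_mono (c t) (by linarith)
    rw [hspec] at this
    linarith

def quadM (μ : Measure E2) (v : E2) (α : ℝ) (s₁ s₂ : Bool) : ℝ :=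
  (μ (halfPlane (rot α v) (medD μ (rot α v)) s₁
    ∩ halfPlane (rot (-α) v) (medD μ (rot (-α) v)) s₂)).toReal

lemma continuous_quadM (hlines : ∀ v : E2, v ≠ 0 → ∀ a : ℝ, μ {x | ⟪v, x⟫ = a} = 0)
    (hconn : IsConnected (msupport μ)) (hm0 : μ Set.univ ≠ 0)
    {v : E2} (hv : ‖v‖ = 1) (s₁ s₂ : Bool) : Continuous fun α => quadM μ v α s₁ s₂ := by
  have hu1 : ∀ α : ℝ, ‖rot α v‖ = 1 := fun α => by rw [norm_rot, hv]
  have hne : ∀ α : ℝ, rot α v ≠ 0 := fun α h => by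
    have := hu1 α; rw [h] at this; simp at this
  unfold quadM
  rw [continuous_iff_continuousAt]
  intro α
  have hc1 : Continuous fun t : ℝ => rot t v := continuous_rot v
  have hc2 : Continuous fun t : ℝ => rot (-t) v := (continuous_rot v).comp continuous_neg
  have hm1 : Tendsto (fun t : ℝ => medD μ (rot t v)) (𝓝 α) (𝓝 (medD μ (rot α v))) :=
    tendsto_medD hlines hconn hm0 hc1 hu1 α
  have hm2 : Tendsto (fun t : ℝ => medD μ (rot (-t) v)) (𝓝 α) (𝓝 (medD μ (rot (-α) v))) :=
    tendsto_medD hlines hconn hm0 hc2 (fun t => hu1 (-t)) α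
  have hT : Tendsto (fun t : ℝ =>
      (((rot t v, medD μ (rot t v)), (rot (-t) v, medD μ (rot (-t) v)))
        : (E2 × ℝ) × (E2 × ℝ))) (𝓝 α)
      (𝓝 ((rot α v, medD μ (rot α v)), (rot (-α) v, medD μ (rot (-α) v)))) :=
    (((hc1.tendsto α).prodMk_nhds hm1).prodMk_nhds ((hc2.tendsto α).prodMk_nhds hm2))
  have h1 := (tendsto_measure_quad hlines (hne α) (hne (-α)) (medD μ (rot α v))
    (medD μ (rot (-α) v)) s₁ s₂).comp hT
  exact (ENNReal.tendsto_toReal (measure_ne_top μ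
    (halfPlane (rot α v) (medD μ (rot α v)) s₁
      ∩ halfPlane (rot (-α) v) (medD μ (rot (-α) v)) s₂))).comp h1


/-- Four-partitioning a mass distribution in the plane with a prescribed angular bisector:
for a mass distribution `μ` with connected support and a unit vector `v`, there are two lines
(with normals `v` rotated by `±α` for some angle `α ∈ (0, π/2)`, so that `v` bisects the
angle between the lines) whose four open quadrants each carry measure `μ(ℝ²)/4`. -/
theorem stmt11 (μ : Measure E2) [IsFiniteMeasure μ]
    (hlines : ∀ v : E2, v ≠ 0 → ∀ a : ℝ, μ {x | ⟪v, x⟫ = a} = 0)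
    (hconn : IsConnected (msupport μ))
    (v : E2) (hv : ‖v‖ = 1) :
    ∃ α ∈ Set.Ioo (0 : ℝ) (π / 2), ∃ a₁ a₂ : ℝ, ∀ s₁ s₂ : Bool,
      μ (halfPlane (rot α v) a₁ s₁ ∩ halfPlane (rot (-α) v) a₂ s₂) = μ Set.univ / 4 := by
  by_cases hm0 : μ Set.univ = 0
  · refine ⟨π / 4, ⟨by positivity, by linarith [pi_pos]⟩, 0, 0, fun s₁ s₂ => ?_⟩
    rw [measure_mono_null (Set.subset_univ _) hm0, hm0, ENNReal.zero_div]
  have hmpos : 0 < (μ Set.univ).toReal := ENNReal.toReal_pos hm0 (measure_ne_top μ _)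
  have hu1 : ∀ α : ℝ, ‖rot α v‖ = 1 := fun α => by rw [norm_rot, hv]
  have hne : ∀ α : ℝ, rot α v ≠ 0 := fun α h => by
    have := hu1 α; rw [h] at this; simp at this
  have hhalf : ∀ α : ℝ, FrD μ (rot α v) (medD μ (rot α v)) = (μ Set.univ).toReal / 2 :=
    fun α => medD_spec hlines hm0 (hu1 α)
  have hf0tt : quadM μ v 0 true true = (μ Set.univ).toReal / 2 := by
    unfold quadM
    rw [neg_zero, Set.inter_self, FrD_compl hlines (hne 0), hhalf 0]
    ring
  have hf0tf : quadM μ v 0 true false = 0 := by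
    unfold quadM
    rw [neg_zero, halfPlane_inter_self_empty]
    simp
  have hwnorm : ‖-rot (π / 2) v‖ = 1 := by rw [norm_neg]; exact hu1 _
  have hmw : medD μ (-rot (π / 2) v) = -(medD μ (rot (π / 2) v)) := by
    apply halving_uniq hlines hconn hm0 hwnorm
    · exact medD_spec hlines hm0 hwnorm
    · show (μ (halfPlane (-rot (π / 2) v) (-(medD μ (rot (π / 2) v))) false)).toReal = _
      rw [halfPlane_neg, show (!false) = true from rfl,
        FrD_compl hlines (hne (π / 2)), hhalf (π / 2)]
      ring
  have hfptt : quadM μ v (π / 2) true true = 0 := by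
    unfold quadM
    rw [rot_neg_pi_div_two, hmw, halfPlane_neg, show (!true) = false from rfl,
      halfPlane_inter_self_empty]
    simp
  have hfptf : quadM μ v (π / 2) true false = (μ Set.univ).toReal / 2 := by
    unfold quadM
    rw [rot_neg_pi_div_two, hmw, halfPlane_neg, show (!false) = true from rfl,
      Set.inter_self, FrD_compl hlines (hne (π / 2)), hhalf (π / 2)]
    ring
  have hcont : Continuous fun α => quadM μ v α true true - quadM μ v α true false :=
    (continuous_quadM hlines hconn hm0 hv true true).sub
      (continuous_quadM hlines hconn hm0 hv true false)
  have hmem : (0 : ℝ) ∈ Set.Icc (quadM μ v (π / 2) true true - quadM μ v (π / 2) true false)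
      (quadM μ v 0 true true - quadM μ v 0 true false) := by
    rw [hf0tt, hf0tf, hfptt, hfptf]
    constructor <;> [linarith; linarith]
  obtain ⟨α, hαmem, hα⟩ := intermediate_value_Icc' (by positivity : (0 : ℝ) ≤ π / 2)
    hcont.continuousOn hmem
  have hα' : quadM μ v α true true - quadM μ v α true false = 0 := hα
  have hα0 : α ≠ 0 := by
    intro h
    rw [h, hf0tt, hf0tf] at hα'
    linarith
  have hαpi : α ≠ π / 2 := by
    intro h
    rw [h, hfptt, hfptf] at hα'
    linarith
  refine ⟨α, ⟨lt_of_le_of_ne hαmem.1 (Ne.symm hα0), lt_of_le_of_ne hαmem.2 hαpi⟩,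
    medD μ (rot α v), medD μ (rot (-α) v), ?_⟩
  have hAB : (μ (halfPlane (rot α v) (medD μ (rot α v)) true
        ∩ halfPlane (rot (-α) v) (medD μ (rot (-α) v)) true)).toReal
      - (μ (halfPlane (rot α v) (medD μ (rot α v)) true
        ∩ halfPlane (rot (-α) v) (medD μ (rot (-α) v)) false)).toReal = 0 := hα'
  have hA := quad_sum hlines (hne (-α)) (medD μ (rot (-α) v))
    (measurableSet_halfPlane (rot α v) (medD μ (rot α v)) true)
  have hB := quad_sum hlines (hne (-α)) (medD μ (rot (-α) v))
    (measurableSet_halfPlane (rot α v) (medD μ (rot α v)) false)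
  have hC := quad_sum hlines (hne α) (medD μ (rot α v))
    (measurableSet_halfPlane (rot (-α) v) (medD μ (rot (-α) v)) false)
  rw [Set.inter_comm (halfPlane (rot (-α) v) (medD μ (rot (-α) v)) false)
      (halfPlane (rot α v) (medD μ (rot α v)) false),
    Set.inter_comm (halfPlane (rot (-α) v) (medD μ (rot (-α) v)) false)
      (halfPlane (rot α v) (medD μ (rot α v)) true)] at hC
  have hG1 : (μ (halfPlane (rot α v) (medD μ (rot α v)) true)).toReal
      = (μ Set.univ).toReal - FrD μ (rot α v) (medD μ (rot α v)) :=
    FrD_compl hlines (hne α) _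
  have hFr1 : FrD μ (rot α v) (medD μ (rot α v)) = (μ Set.univ).toReal / 2 := hhalf α
  have hFr2 : FrD μ (rot (-α) v) (medD μ (rot (-α) v)) = (μ Set.univ).toReal / 2 := hhalf (-α)
  have hrfl1 : FrD μ (rot α v) (medD μ (rot α v))
      = (μ (halfPlane (rot α v) (medD μ (rot α v)) false)).toReal := rfl
  have hrfl2 : FrD μ (rot (-α) v) (medD μ (rot (-α) v))
      = (μ (halfPlane (rot (-α) v) (medD μ (rot (-α) v)) false)).toReal := rfl
  have h4top : μ Set.univ / 4 ≠ ⊤ :=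
    (ENNReal.div_lt_top (measure_ne_top μ _) (by norm_num)).ne
  have h4tr : (μ Set.univ / 4).toReal = (μ Set.univ).toReal / 4 := by
    rw [ENNReal.toReal_div]
    norm_num
  intro s₁ s₂
  apply (ENNReal.toReal_eq_toReal_iff' (measure_ne_top μ _) h4top).mp
  rw [h4tr]
  cases s₁ <;> cases s₂ <;> linarith [hA, hB, hC, hAB, hG1, hFr1, hFr2, hrfl1, hrfl2]
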